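/- Let (A,Q) be a finite quadratic module. Then (∑_{x∈A} e(Q(x)))·(∑_{x∈A} e(−Q(x))) = |A|. In particular the Gauss sum ∑_{x∈A} e(Q(x)) is nonzero and has absolute value √|A|. -/

import Mathlib

open Finset

noncomputable def qe (q : AddCircle (1 : ℚ)) : ℂ :=
  Complex.exp (2 * (Real.pi : ℂ) * Complex.I * ((q.out : ℚ) : ℂ))

/-- `(A, Q)` is a finite quadratic module: `Q` is a nondegenerate quadratic form
with values in `ℚ/ℤ`. -/
def IsFQM {A : Type*} [AddCommGroup A] (Q : A → AddCircle (1 : ℚ)) : Prop :=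
  (∀ (n : ℤ) (x : A), Q (n • x) = n ^ 2 • Q x) ∧
  (∀ x x' y : A,
      Q (x + x' + y) - Q (x + x') - Q y =
        (Q (x + y) - Q x - Q y) + (Q (x' + y) - Q x' - Q y)) ∧
  (∀ x : A, (∀ y : A, Q (x + y) - Q x - Q y = 0) → x = 0)

/-- The standard basis vector `𝔢_x` of `ℂ[A]`. -/
noncomputable def indic {A : Type*} [DecidableEq A] (x : A) : A → ℂ :=
  fun y => if y = x then 1 else 0

/-- The Weil representation operator `T`. -/
noncomputable def weilT {A : Type*} [AddCommGroup A] [Fintype A]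
    (Q : A → AddCircle (1 : ℚ)) : (A → ℂ) →ₗ[ℂ] (A → ℂ) where
  toFun v := fun x => qe (Q x) * v x
  map_add' u v := by funext x; simp [mul_add]
  map_smul' c v := by funext x; simp [smul_eq_mul]; ring

/-- The Weil representation operator `S`. -/
noncomputable def weilS {A : Type*} [AddCommGroup A] [Fintype A]
    (Q : A → AddCircle (1 : ℚ)) : (A → ℂ) →ₗ[ℂ] (A → ℂ) where
  toFun v := fun y =>
    ((Fintype.card A : ℂ)⁻¹ * ∑ z, qe (-(Q z))) *
      ∑ x, qe (-(Q (x + y) - Q x - Q y)) * v x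
  map_add' u v := by
    funext y
    simp only [Pi.add_apply, mul_add, Finset.sum_add_distrib]
  map_smul' c v := by
    funext y
    simp only [Pi.smul_apply, smul_eq_mul, RingHom.id_apply, Finset.mul_sum]
    exact Finset.sum_congr rfl fun x _ => by ring

/-- The space of invariants of the Weil representation. -/
noncomputable def weilInv {A : Type*} [AddCommGroup A] [Fintype A]
    (Q : A → AddCircle (1 : ℚ)) : Submodule ℂ (A → ℂ) where
  carrier := {v | weilS Q v = v ∧ weilT Q v = v}
  add_mem' := by
    rintro u v ⟨hu1, hu2⟩ ⟨hv1, hv2⟩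
    exact ⟨by rw [map_add, hu1, hv1], by rw [map_add, hu2, hv2]⟩
  zero_mem' := ⟨map_zero _, map_zero _⟩
  smul_mem' := by
    rintro c v ⟨h1, h2⟩
    exact ⟨by rw [map_smul, h1], by rw [map_smul, h2]⟩

/-- `N` is the level of `(A,Q)`. -/
def IsLvl {A : Type*} [AddCommGroup A] (Q : A → AddCircle (1 : ℚ)) (N : ℕ) : Prop :=
  0 < N ∧ (∀ x, N • Q x = 0) ∧ ∀ M : ℕ, 0 < M → (∀ x, M • Q x = 0) → N ≤ M

lemma qe_coe (r : ℚ) : qe (r : AddCircle (1 : ℚ)) =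
    Complex.exp (2 * (Real.pi : ℂ) * Complex.I * (r : ℂ)) := by
  unfold qe
  have hout : (((r : AddCircle (1:ℚ)).out : ℚ) : AddCircle (1:ℚ)) = (r : AddCircle (1:ℚ)) :=
    Quotient.out_eq' _
  rw [QuotientAddGroup.eq_iff_sub_mem, AddSubgroup.mem_zmultiples_iff] at hout
  obtain ⟨k, hk⟩ := hout
  have : (((r : AddCircle (1:ℚ)).out : ℚ) : ℂ) = (r : ℂ) + (k : ℂ) := by
    have : ((r : AddCircle (1:ℚ)).out : ℚ) = r + k := by
      rw [zsmul_eq_mul, mul_one] at hk; linarith [hk]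
    rw [this]; push_cast; ring
  rw [this, mul_add, Complex.exp_add]
  rw [show 2 * (Real.pi : ℂ) * Complex.I * (k : ℂ) = (k : ℂ) * (2 * Real.pi * Complex.I) by ring,
    Complex.exp_int_mul_two_pi_mul_I, mul_one]

lemma out_coe (q : AddCircle (1 : ℚ)) : ((q.out : ℚ) : AddCircle (1:ℚ)) = q :=
  Quotient.out_eq' _

lemma qe_add (a b : AddCircle (1 : ℚ)) : qe (a + b) = qe a * qe b := by
  conv_lhs => rw [← out_coe a, ← out_coe b]
  rw [← AddCircle.coe_add, qe_coe]
  conv_rhs => rw [← out_coe a, ← out_coe b, qe_coe, qe_coe]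
  push_cast
  rw [mul_add, Complex.exp_add]

lemma qe_zero : qe (0 : AddCircle (1 : ℚ)) = 1 := by
  have : ((0 : ℚ) : AddCircle (1:ℚ)) = 0 := by norm_cast
  rw [← this, qe_coe]; simp

lemma qe_neg (a : AddCircle (1 : ℚ)) : qe (-a) = (starRingEnd ℂ) (qe a) := by
  conv_lhs => rw [← out_coe a]
  rw [← AddCircle.coe_neg, qe_coe]
  unfold qe
  rw [← Complex.exp_conj]
  congr 1
  have him : ((a.out : ℚ) : ℂ).im = 0 := by simp
  simp only [map_mul, Complex.conj_I, Complex.conj_ofReal, map_ofNat,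
    Complex.conj_eq_iff_im.2 him]
  push_cast
  ring

lemma qe_ne_one {a : AddCircle (1 : ℚ)} (h : a ≠ 0) : qe a ≠ 1 := by
  intro hq
  unfold qe at hq
  rw [Complex.exp_eq_one_iff] at hq
  obtain ⟨n, hn⟩ := hq
  have hπ : (2 * (Real.pi : ℂ) * Complex.I) ≠ 0 :=
    mul_ne_zero (mul_ne_zero two_ne_zero (Complex.ofReal_ne_zero.2 Real.pi_ne_zero))
      Complex.I_ne_zero
  have hc : ((a.out : ℚ) : ℂ) = (n : ℂ) := by
    have h2 : 2 * (Real.pi : ℂ) * Complex.I * ((a.out : ℚ) : ℂ) =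
        2 * (Real.pi : ℂ) * Complex.I * (n : ℂ) := by rw [hn]; ring
    exact mul_left_cancel₀ hπ h2
  have hq2 : ((a.out : ℚ)) = (n : ℚ) := by exact_mod_cast hc
  apply h
  rw [← out_coe a, hq2]
  rw [← QuotientAddGroup.mk_zero, QuotientAddGroup.eq_iff_sub_mem,
    AddSubgroup.mem_zmultiples_iff]
  exact ⟨n, by simp⟩

/-- `(∑ e(Q(x)))·(∑ e(-Q(x))) = |A|`; in particular the Gauss sum of a finite
quadratic module is nonzero, of absolute value `√|A|`. -/
theorem stmt15 {A : Type*} [AddCommGroup A] [Fintype A]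
    (Q : A → AddCircle (1 : ℚ)) (hQ : IsFQM Q) :
    (∑ x, qe (Q x)) * (∑ x, qe (-(Q x))) = (Fintype.card A : ℂ) ∧
    (∑ x, qe (Q x)) ≠ 0 ∧
    ‖∑ x, qe (Q x)‖ = Real.sqrt (Fintype.card A) := by
  obtain ⟨h1, h2, h3⟩ := hQ
  have hQ0 : Q 0 = 0 := by
    have := h1 0 0
    simpa using this
  have hB2 : ∀ z y y' : A, Q (z + (y + y')) - Q z - Q (y + y') =
      (Q (z + y) - Q z - Q y) + (Q (z + y') - Q z - Q y') := by
    intro z y y'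
    have := h2 y y' z
    rw [show y + y' + z = z + (y + y') by abel, show y + z = z + y by abel,
      show y' + z = z + y' by abel] at this
    have h4 : Q (z + (y + y')) - Q (y + y') - Q z =
        Q (z + (y + y')) - Q z - Q (y + y') := by abel
    have h5 : (Q (z + y) - Q y - Q z) + (Q (z + y') - Q y' - Q z) =
        (Q (z + y) - Q z - Q y) + (Q (z + y') - Q z - Q y') := by abel
    rw [h4, h5] at this
    exact this
  -- character sum
  have sum_char : ∀ z : A, z ≠ 0 → ∑ y : A, qe (Q (z + y) - Q z - Q y) = 0 := by
    intro z hz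
    let χ : AddChar A ℂ :=
      { toFun := fun y => qe (Q (z + y) - Q z - Q y)
        map_zero_eq_one' := by
          simp only [add_zero, hQ0, sub_zero, sub_self, qe_zero]
        map_add_eq_mul' := by
          intro y y'
          rw [← qe_add, hB2] }
    have hχ : χ ≠ 1 := by
      rw [AddChar.ne_one_iff]
      have : ¬ ∀ y : A, Q (z + y) - Q z - Q y = 0 := fun h => hz (h3 z h)
      push_neg at this
      obtain ⟨y, hy⟩ := this
      exact ⟨y, qe_ne_one hy⟩
    exact AddChar.sum_eq_zero_of_ne_one hχ
  have key : (∑ x, qe (Q x)) * (∑ x, qe (-(Q x))) = (Fintype.card A : ℂ) := by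
    rw [Finset.sum_mul_sum, Finset.sum_comm]
    have step1 : ∀ y : A, ∑ x : A, qe (Q x) * qe (-(Q y)) =
        ∑ z : A, qe (Q (z + y) - Q z - Q y) * qe (Q z) := by
      intro y
      rw [← Fintype.sum_equiv (Equiv.addRight y)
        (fun z => qe (Q (z + y) - Q z - Q y) * qe (Q z))
        (fun x => qe (Q x) * qe (-(Q y)))]
      intro z
      simp only [Equiv.coe_addRight]
      rw [← qe_add, ← qe_add]
      congr 1
      abel
    calc ∑ y : A, ∑ x : A, qe (Q x) * qe (-(Q y))
        = ∑ y : A, ∑ z : A, qe (Q (z + y) - Q z - Q y) * qe (Q z) :=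
          Finset.sum_congr rfl fun y _ => step1 y
      _ = ∑ z : A, qe (Q z) * ∑ y : A, qe (Q (z + y) - Q z - Q y) := by
          rw [Finset.sum_comm]
          exact Finset.sum_congr rfl fun z _ => by
            rw [Finset.mul_sum]
            exact Finset.sum_congr rfl fun y _ => mul_comm _ _
      _ = (Fintype.card A : ℂ) := by
          rw [Fintype.sum_eq_single (0 : A)
            (fun z hz => by rw [sum_char z hz, mul_zero])]
          simp [hQ0, qe_zero]
  have hconj : (∑ x, qe (-(Q x))) = (starRingEnd ℂ) (∑ x, qe (Q x)) := by
    rw [map_sum]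
    exact Finset.sum_congr rfl fun x _ => qe_neg _
  have hns : Complex.normSq (∑ x, qe (Q x)) = (Fintype.card A : ℝ) := by
    have hk := key
    rw [hconj, Complex.mul_conj] at hk
    exact_mod_cast hk
  have hne : (∑ x, qe (Q x)) ≠ 0 := by
    intro h
    rw [h, map_zero] at hns
    exact (Nat.cast_ne_zero (R := ℝ)).2 Fintype.card_pos.ne' hns.symm
  refine ⟨key, hne, ?_⟩
  rw [Complex.norm_def, hns]
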